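/- arXiv:1708.02371 — 3 statements merged into one kernel-verified Lean document; each statement's English description precedes it below -/
import Mathlib

section
/- Suppose t̄ > 0 is a local minimum of f on (0, ∞), and suppose x̄ ∈ X attains the minimum defining f(t̄), i.e., f(t̄) = g(x̄, t̄). Then the upper bound is tight at t̄: cᵀx̄ + Ω·√(x̄ᵀQx̄) = f(t̄); moreover t̄ = √(x̄ᵀQx̄). -/
open Matrix

theorem upper_bound_tight_at_local_minima {n : ℕ}
    (Q : Matrix (Fin n) (Fin n) ℝ) (hQ : Q.PosSemidef)
    (c : Fin n → ℝ) (Omega : ℝ) (hOmega : 0 < Omega)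
    (X : Finset (Fin n → ℝ)) (hX : X.Nonempty)
    (g : (Fin n → ℝ) → ℝ → ℝ)
    (hg : ∀ x t, g x t = c ⬝ᵥ x + (Omega / (2 * t)) * (x ⬝ᵥ Q.mulVec x) + (Omega / 2) * t)
    (f : ℝ → ℝ) (hf : ∀ t, f t = X.inf' hX (fun x => g x t))
    (tbar : ℝ) (htbar : 0 < tbar)
    (hloc : ∃ δ > 0, ∀ t : ℝ, 0 < t → |t - tbar| ≤ δ → f tbar ≤ f t)
    (xbar : Fin n → ℝ) (hxbar : xbar ∈ X) (hatt : f tbar = g xbar tbar) :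
    c ⬝ᵥ xbar + Omega * Real.sqrt (xbar ⬝ᵥ Q.mulVec xbar) = f tbar ∧
    tbar = Real.sqrt (xbar ⬝ᵥ Q.mulVec xbar) := by
  obtain ⟨δ, hδ, hloc⟩ := hloc
  set q : ℝ := xbar ⬝ᵥ Q.mulVec xbar with hqdef
  have hq0 : 0 ≤ q := by simpa using hQ.dotProduct_mulVec_nonneg xbar
  have key : ∀ t : ℝ, 0 < t → |t - tbar| ≤ δ → g xbar tbar ≤ g xbar t := by
    intro t ht hd
    calc g xbar tbar = f tbar := hatt.symm
      _ ≤ f t := hloc t ht hd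
      _ ≤ g xbar t := by rw [hf]; exact Finset.inf'_le _ hxbar
  have hdiff : ∀ t : ℝ, 0 < t →
      g xbar t - g xbar tbar = (Omega / 2) * ((tbar - t) * (q - t * tbar)) / (t * tbar) := by
    intro t ht
    rw [hg, hg]
    field_simp
    ring
  have hqt : q = tbar ^ 2 := by
    by_contra hne
    rcases lt_or_gt_of_ne hne with hlt | hgt
    · -- q < tbar², perturb down
      have hql : q / tbar < tbar := by
        rw [div_lt_iff₀ htbar]; nlinarith
      set m : ℝ := min δ ((tbar - q / tbar) / 2) with hm
      have hm0 : 0 < m := lt_min hδ (by linarith)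
      set t : ℝ := tbar - m with htdef
      have hmle : m ≤ (tbar - q / tbar) / 2 := min_le_right _ _
      have ht0 : 0 < t := by
        have : 0 ≤ q / tbar := div_nonneg hq0 htbar.le
        simp only [htdef]; linarith
      have hd : |t - tbar| ≤ δ := by
        rw [htdef]
        rw [show tbar - m - tbar = -m by ring, abs_neg, abs_of_pos hm0]
        exact min_le_left _ _
      have hk := key t ht0 hd
      have hqtt : q < t * tbar := by
        have : q / tbar < t := by simp only [htdef]; linarith
        calc q = (q / tbar) * tbar := by field_simp
          _ < t * tbar := by exact mul_lt_mul_of_pos_right this htbar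
      have hd2 := hdiff t ht0
      have hneg : (Omega / 2) * ((tbar - t) * (q - t * tbar)) / (t * tbar) < 0 := by
        apply div_neg_of_neg_of_pos
        · apply mul_neg_of_pos_of_neg (by linarith)
          apply mul_neg_of_pos_of_neg
          · simp only [htdef]; linarith
          · linarith
        · exact mul_pos ht0 htbar
      linarith
    · -- q > tbar², perturb up
      have hql : tbar < q / tbar := by
        rw [lt_div_iff₀ htbar]; nlinarith
      set m : ℝ := min δ ((q / tbar - tbar) / 2) with hm
      have hm0 : 0 < m := lt_min hδ (by linarith)
      set t : ℝ := tbar + m with htdef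
      have hmle : m ≤ (q / tbar - tbar) / 2 := min_le_right _ _
      have ht0 : 0 < t := by simp only [htdef]; linarith
      have hd : |t - tbar| ≤ δ := by
        rw [htdef, show tbar + m - tbar = m by ring, abs_of_pos hm0]
        exact min_le_left _ _
      have hk := key t ht0 hd
      have hqtt : t * tbar < q := by
        have : t < q / tbar := by simp only [htdef]; linarith
        calc t * tbar < (q / tbar) * tbar := mul_lt_mul_of_pos_right this htbar
          _ = q := by field_simp
      have hd2 := hdiff t ht0
      have hneg : (Omega / 2) * ((tbar - t) * (q - t * tbar)) / (t * tbar) < 0 := by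
        apply div_neg_of_neg_of_pos
        · apply mul_neg_of_pos_of_neg (by linarith)
          apply mul_neg_of_neg_of_pos
          · simp only [htdef]; linarith
          · linarith
        · exact mul_pos ht0 htbar
      linarith
  have hsq : Real.sqrt q = tbar := by
    rw [hqt, Real.sqrt_sq htbar.le]
  refine ⟨?_, hsq.symm⟩
  rw [hatt, hg, hsq, ← hqdef, hqt]
  field_simp
  ring
end

section
/- The mean-risk problem and its perspective reformulation are equivalent: min_{x ∈ X} ( cᵀx + Ω·√(xᵀQx) ) = inf_{t > 0} f(t), i.e., the minimum over x ∈ X of cᵀx + Ω·√(xᵀQx) equals the infimum over t > 0 and x ∈ X of cᵀx + (Ω/(2t))·xᵀQx + (Ω/2)·t. -/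
open Matrix

theorem meanRisk_eq_perspective_reformulation {n : ℕ}
    (Q : Matrix (Fin n) (Fin n) ℝ) (hQ : Q.PosSemidef)
    (c : Fin n → ℝ) (Omega : ℝ) (hOmega : 0 < Omega)
    (X : Finset (Fin n → ℝ)) (hX : X.Nonempty)
    (g : (Fin n → ℝ) → ℝ → ℝ)
    (hg : ∀ x t, g x t = c ⬝ᵥ x + (Omega / (2 * t)) * (x ⬝ᵥ Q.mulVec x) + (Omega / 2) * t)
    (f : ℝ → ℝ) (hf : ∀ t, f t = X.inf' hX (fun x => g x t)) :
    X.inf' hX (fun x => c ⬝ᵥ x + Omega * Real.sqrt (x ⬝ᵥ Q.mulVec x)) =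
      sInf {z : ℝ | ∃ t : ℝ, 0 < t ∧ z = f t} := by
  set L := X.inf' hX (fun x => c ⬝ᵥ x + Omega * Real.sqrt (x ⬝ᵥ Q.mulVec x)) with hL
  set S := {z : ℝ | ∃ t : ℝ, 0 < t ∧ z = f t} with hS
  -- every element of S is ≥ L (AM-GM)
  have hlb : ∀ z ∈ S, L ≤ z := by
    rintro z ⟨t, ht, rfl⟩
    rw [hf]
    apply Finset.le_inf'
    intro x hx
    refine le_trans (Finset.inf'_le _ hx) ?_
    have hq : 0 ≤ x ⬝ᵥ Q.mulVec x := by simpa using hQ.dotProduct_mulVec_nonneg x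
    rw [hg]
    have hsq : Real.sqrt (x ⬝ᵥ Q.mulVec x) ^ 2 = x ⬝ᵥ Q.mulVec x := Real.sq_sqrt hq
    have hkey : Omega * Real.sqrt (x ⬝ᵥ Q.mulVec x) ≤
        (Omega / (2 * t)) * (x ⬝ᵥ Q.mulVec x) + (Omega / 2) * t := by
      rw [div_mul_eq_mul_div, div_add' _ _ _ (by positivity), div_mul_eq_mul_div,
        le_div_iff₀ (by positivity)]
      nlinarith [sq_nonneg (Real.sqrt (x ⬝ᵥ Q.mulVec x) - t), Real.sqrt_nonneg (x ⬝ᵥ Q.mulVec x)]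
    linarith
  have hne : S.Nonempty := ⟨f 1, 1, one_pos, rfl⟩
  have hbdd : BddBelow S := ⟨L, hlb⟩
  apply le_antisymm
  · exact le_csInf hne hlb
  · -- sInf S ≤ L via: sInf S < L + ε fails... use forall ε
    rcases Finset.exists_mem_eq_inf' hX (fun x => c ⬝ᵥ x + Omega * Real.sqrt (x ⬝ᵥ Q.mulVec x))
      with ⟨x₀, hx₀, hLx₀⟩
    have hq : 0 ≤ x₀ ⬝ᵥ Q.mulVec x₀ := by simpa using hQ.dotProduct_mulVec_nonneg x₀
    rcases eq_or_lt_of_le hq with hq0 | hqpos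
    · -- q = 0 : approach with t → 0
      have hsqrt : Real.sqrt (x₀ ⬝ᵥ Q.mulVec x₀) = 0 := by rw [← hq0]; exact Real.sqrt_zero
      have : ∀ ε > 0, sInf S ≤ L + ε := by
        intro ε hε
        set t := ε / Omega with htdef
        have ht : 0 < t := by positivity
        have hft : f t ≤ L + ε := by
          rw [hf]
          calc X.inf' hX (fun x => g x t) ≤ g x₀ t := Finset.inf'_le _ hx₀
            _ = c ⬝ᵥ x₀ + (Omega / 2) * t := by rw [hg, ← hq0]; ring
            _ ≤ c ⬝ᵥ x₀ + ε := by
                have : (Omega / 2) * t ≤ ε := by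
                  rw [htdef]; rw [div_mul_div_comm]
                  rw [div_le_iff₀ (by positivity)]
                  nlinarith
                linarith
            _ = L + ε := by rw [hL, hLx₀, hsqrt]; ring
        exact le_trans (csInf_le hbdd ⟨t, ht, rfl⟩) hft
      linarith [le_of_forall_pos_le_add this]
    · -- q > 0 : take t = √q
      set t := Real.sqrt (x₀ ⬝ᵥ Q.mulVec x₀) with htdef
      have ht : 0 < t := Real.sqrt_pos.mpr hqpos
      have hsq : t ^ 2 = x₀ ⬝ᵥ Q.mulVec x₀ := Real.sq_sqrt hq
      have hft : f t ≤ L := by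
        rw [hf]
        calc X.inf' hX (fun x => g x t) ≤ g x₀ t := Finset.inf'_le _ hx₀
          _ = c ⬝ᵥ x₀ + Omega * t := by
              rw [hg, ← hsq]
              field_simp
              ring
          _ = L := by rw [hL, hLx₀]
      exact le_trans (csInf_le hbdd ⟨t, ht, rfl⟩) hft
end

section
/- Suppose t* > 0 attains the infimum of f over (0, ∞), i.e., f(t*) ≤ f(t) for all t > 0, and suppose x* ∈ X attains the minimum defining f(t*), i.e., f(t*) = g(x*, t*). Then x* is an optimal solution of the mean-risk problem: cᵀx* + Ω·√(x*ᵀQx*) = min_{x ∈ X} ( cᵀx + Ω·√(xᵀQx) ), and this common value equals f(t*). -/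
open Matrix

theorem global_min_gives_meanRisk_optimal {n : ℕ}
    (Q : Matrix (Fin n) (Fin n) ℝ) (hQ : Q.PosSemidef)
    (c : Fin n → ℝ) (Omega : ℝ) (hOmega : 0 < Omega)
    (X : Finset (Fin n → ℝ)) (hX : X.Nonempty)
    (g : (Fin n → ℝ) → ℝ → ℝ)
    (hg : ∀ x t, g x t = c ⬝ᵥ x + (Omega / (2 * t)) * (x ⬝ᵥ Q.mulVec x) + (Omega / 2) * t)
    (f : ℝ → ℝ) (hf : ∀ t, f t = X.inf' hX (fun x => g x t))
    (tstar : ℝ) (htstar : 0 < tstar)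
    (hglob : ∀ t : ℝ, 0 < t → f tstar ≤ f t)
    (xstar : Fin n → ℝ) (hxstar : xstar ∈ X) (hatt : f tstar = g xstar tstar) :
    c ⬝ᵥ xstar + Omega * Real.sqrt (xstar ⬝ᵥ Q.mulVec xstar) =
      X.inf' hX (fun x => c ⬝ᵥ x + Omega * Real.sqrt (x ⬝ᵥ Q.mulVec x)) ∧
    c ⬝ᵥ xstar + Omega * Real.sqrt (xstar ⬝ᵥ Q.mulVec xstar) = f tstar := by
  -- q ≥ 0 for any x
  have hq : ∀ x : Fin n → ℝ, 0 ≤ x ⬝ᵥ Q.mulVec x := by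
    intro x
    have := hQ.dotProduct_mulVec_nonneg x
    simpa using this
  set F : (Fin n → ℝ) → ℝ := fun x => c ⬝ᵥ x + Omega * Real.sqrt (x ⬝ᵥ Q.mulVec x) with hF
  -- AM-GM: F x ≤ g x t for all t > 0
  have key : ∀ (x : Fin n → ℝ) (t : ℝ), 0 < t → F x ≤ g x t := by
    intro x t ht
    rw [hg]
    set q := x ⬝ᵥ Q.mulVec x with hqdef
    set s := Real.sqrt q with hs
    have hs0 : 0 ≤ s := Real.sqrt_nonneg q
    have hsq : s ^ 2 = q := Real.sq_sqrt (hq x)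
    have hdiff : Omega / (2 * t) * q + Omega / 2 * t - Omega * s
        = Omega * (s - t) ^ 2 / (2 * t) := by
      rw [← hsq]; field_simp; ring
    have hpos : 0 ≤ Omega * (s - t) ^ 2 / (2 * t) := by positivity
    simp only [hF]
    linarith [hdiff, hpos]
  -- f tstar ≤ F x for all x ∈ X
  have hle : ∀ x ∈ X, f tstar ≤ F x := by
    intro x hx
    set q := x ⬝ᵥ Q.mulVec x with hqdef
    have hqx := hq x
    rcases eq_or_lt_of_le hqx with h0 | hpos
    · -- q = 0
      have hq0 : q = 0 := h0.symm
      have hFx : F x = c ⬝ᵥ x := by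
        simp only [hF, ← hqdef, hq0, Real.sqrt_zero, mul_zero, add_zero]
      rw [hFx]
      by_contra hc
      push_neg at hc
      set ε := f tstar - c ⬝ᵥ x with hε
      have hεpos : 0 < ε := by linarith
      have ht : 0 < ε / Omega := by positivity
      have h1 : f tstar ≤ f (ε / Omega) := hglob _ ht
      have h2 : f (ε / Omega) ≤ g x (ε / Omega) := by
        rw [hf]; exact Finset.inf'_le _ hx
      rw [hg, ← hqdef, hq0] at h2
      have : Omega / 2 * (ε / Omega) = ε / 2 := by field_simp
      rw [mul_zero, add_zero, this] at h2
      linarith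
    · -- q > 0
      set s := Real.sqrt q with hs
      have hspos : 0 < s := Real.sqrt_pos.mpr hpos
      have hsq : s ^ 2 = q := Real.sq_sqrt hqx
      have h1 : f tstar ≤ f s := hglob s hspos
      have h2 : f s ≤ g x s := by rw [hf]; exact Finset.inf'_le _ hx
      have h3 : g x s = F x := by
        rw [hg, ← hqdef, ← hsq]
        simp only [hF, ← hqdef, ← hsq]
        rw [Real.sqrt_sq hspos.le]
        field_simp
        ring
      linarith
  -- F xstar ≤ f tstar
  have hFle : F xstar ≤ f tstar := by
    rw [hatt]; exact key xstar tstar htstar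
  have heq : F xstar = f tstar := le_antisymm hFle (hle xstar hxstar)
  constructor
  · apply le_antisymm
    · apply Finset.le_inf'
      intro x hx
      calc F xstar ≤ f tstar := hFle
        _ ≤ F x := hle x hx
    · exact Finset.inf'_le _ hxstar
  · exact heq
end
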